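/- For real a1, a2, b1 with s1 = b1 - a1 - a2, we have Γ(a1+n)Γ(a2+n)/(Γ(b1+n)Γ(-s1+n)) = 1 + (s1+a1)(s1+a2)/(1+s1-n) + O(n^{-2}) as n → ∞ through the natural numbers. -/

import Mathlib

open Filter Asymptotics Topology

lemma Gamma_add_nat (x : ℝ) (hx : 0 < x) (n : ℕ) :
    Real.Gamma (x + n) = Real.Gamma x * ∏ j ∈ Finset.range n, (x + j) := by
  induction n with
  | zero => simp
  | succ n ih =>
      have h1 : x + ((n : ℝ) + 1) = (x + n) + 1 := by ring
      have h2 : (0:ℝ) < x + n := by positivity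
      rw [Finset.prod_range_succ, ← mul_assoc, ← ih, Nat.cast_add, Nat.cast_one, h1,
        Real.Gamma_add_one h2.ne', mul_comm]

lemma tendsto_F {x : ℝ} (hx : 0 < x) :
    Tendsto (fun n : ℕ => Real.Gamma (x + n) / (Real.Gamma n * (n : ℝ) ^ x)) atTop (𝓝 1) := by
  have hΓ : Real.Gamma x ≠ 0 := (Real.Gamma_pos_of_pos hx).ne'
  have h1 : Tendsto (fun n : ℕ => Real.Gamma x / Real.GammaSeq x n) atTop (𝓝 1) := by
    have := (tendsto_const_nhds (x := Real.Gamma x) (f := atTop)).div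
      (Real.GammaSeq_tendsto_Gamma x) hΓ
    rw [div_self hΓ] at this
    exact this
  have h2 : ∀ n : ℕ, 1 ≤ n → Real.Gamma x / Real.GammaSeq x n
      = Real.Gamma (x + (n + 1 : ℕ)) / (Real.Gamma ((n + 1 : ℕ)) * (n : ℝ) ^ x) := by
    intro n hn
    have hn0 : (0:ℝ) < n := by exact_mod_cast hn
    rw [Real.GammaSeq, Gamma_add_nat x hx (n + 1)]
    have hfact : (Real.Gamma ((n + 1 : ℕ)) : ℝ) = (Nat.factorial n : ℝ) := by
      push_cast
      exact_mod_cast Real.Gamma_nat_eq_factorial n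
    rw [hfact]
    have hprod : (0:ℝ) < ∏ j ∈ Finset.range (n + 1), (x + j) := by
      apply Finset.prod_pos
      intro j _
      positivity
    have hfp : (0:ℝ) < (Nat.factorial n : ℝ) := by positivity
    have hrp : (0:ℝ) < (n : ℝ) ^ x := Real.rpow_pos_of_pos hn0 x
    field_simp
  have h3 : Tendsto (fun n : ℕ => ((n : ℝ) / ((n : ℝ) + 1)) ^ x) atTop (𝓝 1) := by
    have hb : Tendsto (fun n : ℕ => (n : ℝ) / ((n : ℝ) + 1)) atTop (𝓝 1) := by
      have := tendsto_natCast_div_add_atTop (𝕜 := ℝ) 1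
      exact this
    simpa using hb.rpow_const (Or.inl one_ne_zero)
  have h4 : Tendsto (fun n : ℕ =>
      Real.Gamma (x + ((n : ℝ) + 1)) / (Real.Gamma ((n : ℝ) + 1) * ((n : ℝ) + 1) ^ x))
      atTop (𝓝 1) := by
    have := h1.mul h3
    rw [mul_one] at this
    apply this.congr'
    filter_upwards [eventually_ge_atTop 1] with n hn
    rw [h2 n hn]
    have hn0 : (0:ℝ) < n := by exact_mod_cast hn
    have hnp : (0:ℝ) < (n:ℝ) + 1 := by positivity
    have hΓn : (0:ℝ) < Real.Gamma ((n:ℝ) + 1) := Real.Gamma_pos_of_pos hnp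
    rw [Real.div_rpow hn0.le hnp.le]
    push_cast
    have e1 : (n:ℝ) ^ x ≠ 0 := (Real.rpow_pos_of_pos hn0 x).ne'
    have e2 : ((n:ℝ) + 1) ^ x ≠ 0 := (Real.rpow_pos_of_pos hnp x).ne'
    field_simp
  rw [← tendsto_add_atTop_iff_nat 1]
  exact h4.congr fun n => by push_cast; ring_nf

lemma g_tendsto (p q r t : ℝ) (h : p + q = r + t) :
    Tendsto (fun n : ℕ => Real.Gamma (p + n) * Real.Gamma (q + n) /
      (Real.Gamma (r + n) * Real.Gamma (t + n))) atTop (𝓝 1) := by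
  obtain ⟨m, hm⟩ := exists_nat_gt (max (max (-p) (-q)) (max (-r) (-t)))
  have hp : 0 < p + m := by
    have : -p < m := lt_of_le_of_lt ((le_max_left _ _).trans (le_max_left _ _)) hm
    linarith
  have hq : 0 < q + m := by
    have : -q < m := lt_of_le_of_lt ((le_max_right _ _).trans (le_max_left _ _)) hm
    linarith
  have hr : 0 < r + m := by
    have : -r < m := lt_of_le_of_lt ((le_max_left _ _).trans (le_max_right _ _)) hm
    linarith
  have ht : 0 < t + m := by
    have : -t < m := lt_of_le_of_lt ((le_max_right _ _).trans (le_max_right _ _)) hm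
    linarith
  set F : ℝ → ℕ → ℝ := fun x k => Real.Gamma (x + k) / (Real.Gamma k * (k : ℝ) ^ x) with hF
  have key : Tendsto (fun k : ℕ =>
      F (p + m) k * F (q + m) k / (F (r + m) k * F (t + m) k)) atTop (𝓝 1) := by
    have := ((tendsto_F hp).mul (tendsto_F hq)).div ((tendsto_F hr).mul (tendsto_F ht))
      (by norm_num)
    rw [mul_one, div_one] at this
    exact this
  have key2 := key.comp (tendsto_sub_atTop_nat m)
  apply key2.congr'
  filter_upwards [eventually_ge_atTop (m + 1)] with n hn
  set k := n - m with hk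
  have hmk : m + k = n := by omega
  have hk1 : 1 ≤ k := by omega
  have hkpos : (0:ℝ) < (k : ℝ) := by exact_mod_cast hk1
  have hΓk : (0:ℝ) < Real.Gamma (k : ℝ) := by
    have : ((k:ℝ)) = ((k - 1 : ℕ) : ℝ) + 1 := by
      push_cast [Nat.cast_sub hk1]; ring
    rw [this, Real.Gamma_nat_eq_factorial]
    positivity
  have cast_eq : ∀ x : ℝ, x + (m : ℝ) + (k : ℝ) = x + (n : ℝ) := by
    intro x
    rw [← hmk]
    push_cast
    ring
  have hpow : (k:ℝ) ^ (p + ↑m) * (k:ℝ) ^ (q + ↑m) = (k:ℝ) ^ (r + ↑m) * (k:ℝ) ^ (t + ↑m) := by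
    rw [← Real.rpow_add hkpos, ← Real.rpow_add hkpos]
    congr 1
    linarith
  have hkp := Real.rpow_pos_of_pos hkpos (p + ↑m)
  have hkq := Real.rpow_pos_of_pos hkpos (q + ↑m)
  have hkr := Real.rpow_pos_of_pos hkpos (r + ↑m)
  have hkt := Real.rpow_pos_of_pos hkpos (t + ↑m)
  have hΓr : (0:ℝ) < Real.Gamma (r + n) := by
    apply Real.Gamma_pos_of_pos
    rw [← cast_eq r]; positivity
  have hΓt : (0:ℝ) < Real.Gamma (t + n) := by
    apply Real.Gamma_pos_of_pos
    rw [← cast_eq t]; positivity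
  show F (p + m) k * F (q + m) k / (F (r + m) k * F (t + m) k) = _
  rw [hF]
  simp only
  rw [cast_eq p, cast_eq q, cast_eq r, cast_eq t]
  rw [div_mul_div_comm, div_mul_div_comm]
  have hU : Real.Gamma k * (k:ℝ) ^ (p + ↑m) * (Real.Gamma k * (k:ℝ) ^ (q + ↑m))
      = Real.Gamma k * (k:ℝ) ^ (r + ↑m) * (Real.Gamma k * (k:ℝ) ^ (t + ↑m)) := by
    linear_combination (Real.Gamma k * Real.Gamma k) * hpow
  rw [hU]
  have hUne : Real.Gamma (k:ℝ) * (k:ℝ) ^ (r + ↑m) * (Real.Gamma (k:ℝ) * (k:ℝ) ^ (t + ↑m)) ≠ 0 := by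
    positivity
  have hYne : Real.Gamma (r + (n:ℝ)) * Real.Gamma (t + (n:ℝ)) ≠ 0 := by positivity
  field_simp

lemma hfrac_helper (a b ρ : ℝ) (hb : b ≠ 0) (hρ : ρ ≠ 0) : a / b = a * ρ / (b * ρ) :=
  (mul_div_mul_right _ _ hρ).symm

lemma half_div_helper (A G : ℝ) (hA : 0 ≤ A) (hG : 1/2 ≤ G) (hGpos : 0 < G) :
    A / G ≤ 2 * A := by
  rw [div_le_iff₀ hGpos]
  nlinarith

set_option maxHeartbeats 1000000 in
theorem gamma_ratio_first_order (a1 a2 b1 s1 : ℝ) (hs : s1 = b1 - a1 - a2) :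
    (fun n : ℕ =>
        Real.Gamma (a1 + n) * Real.Gamma (a2 + n) /
            (Real.Gamma (b1 + n) * Real.Gamma (-s1 + n)) -
          (1 + (s1 + a1) * (s1 + a2) / (1 + s1 - n))) =O[atTop]
      fun n : ℕ => ((n : ℝ))⁻¹ ^ 2 := by
  subst hs
  set S : ℝ := b1 - a1 - a2 with hS
  set c : ℝ := (S + a1) * (S + a2) with hc
  set K : ℝ := c * (b1 + S + 1 + c) with hK
  set g : ℕ → ℝ := fun n => Real.Gamma (a1 + n) * Real.Gamma (a2 + n) /
      (Real.Gamma (b1 + n) * Real.Gamma (-S + n)) with hg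
  set h : ℕ → ℝ := fun n => 1 + c / (1 + S - n) with hh
  set E : ℕ → ℝ := fun n => (g n - h n) / g n with hE
  set d : ℕ → ℝ := fun n => -K / ((b1 + n) * ((n : ℝ) - S) * ((n : ℝ) - S - 1)) with hd
  -- limits
  have hgl : Tendsto g atTop (𝓝 1) := g_tendsto a1 a2 b1 (-S) (by rw [hS]; ring)
  have hhl : Tendsto h atTop (𝓝 1) := by
    have h1 : Tendsto (fun n : ℕ => (n : ℝ) + (-S - 1)) atTop atTop :=
      tendsto_atTop_add_const_right _ _ tendsto_natCast_atTop_atTop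
    have h0 : Tendsto (fun n : ℕ => c / ((n : ℝ) + (-S - 1))) atTop (𝓝 0) :=
      Tendsto.div_atTop tendsto_const_nhds h1
    have : Tendsto (fun n : ℕ => 1 - c / ((n : ℝ) + (-S - 1))) atTop (𝓝 1) := by
      simpa using tendsto_const_nhds.sub h0
    apply this.congr
    intro n
    show 1 - c / ((n:ℝ) + (-S - 1)) = 1 + c / (1 + S - (n:ℝ))
    have e : 1 + S - (n : ℝ) = -((n:ℝ) + (-S - 1)) := by ring
    rw [e, div_neg]
    ring
  have hEl : Tendsto E atTop (𝓝 0) := by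
    have := (hgl.sub hhl).div hgl one_ne_zero
    rw [sub_self, zero_div] at this
    exact this
  -- threshold
  obtain ⟨n0, hn0⟩ := exists_nat_gt (2 * (|a1| + |a2| + |b1| + |S| + 2))
  have hcast : ∀ {n : ℕ}, n0 ≤ n → 2 * (|a1| + |a2| + |b1| + |S| + 2) < (n : ℝ) := by
    intro n hn
    exact hn0.trans_le (by exact_mod_cast hn)
  have habs : -|a1| ≤ a1 ∧ -|a2| ≤ a2 ∧ -|b1| ≤ b1 ∧ -|S| ≤ S ∧ S ≤ |S| ∧ b1 ≤ |b1| ∧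
      0 ≤ |a1| ∧ 0 ≤ |a2| ∧ 0 ≤ |b1| ∧ 0 ≤ |S| :=
    ⟨neg_abs_le _, neg_abs_le _, neg_abs_le _, neg_abs_le _, le_abs_self _, le_abs_self _,
      abs_nonneg _, abs_nonneg _, abs_nonneg _, abs_nonneg _⟩
  obtain ⟨ha1', ha2', hb1', hS1', hS2', hb2', hA1, hA2, hA3, hA4⟩ := habs
  -- positivity facts
  have P1 : ∀ {n : ℕ}, n0 ≤ n → 0 < a1 + (n:ℝ) := fun hn => by have := hcast hn; linarith
  have P2 : ∀ {n : ℕ}, n0 ≤ n → 0 < a2 + (n:ℝ) := fun hn => by have := hcast hn; linarith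
  have P3 : ∀ {n : ℕ}, n0 ≤ n → 0 < b1 + (n:ℝ) := fun hn => by have := hcast hn; linarith
  have P4 : ∀ {n : ℕ}, n0 ≤ n → 0 < -S + (n:ℝ) := fun hn => by have := hcast hn; linarith
  have P5 : ∀ {n : ℕ}, n0 ≤ n → 0 < (n:ℝ) - S - 1 := fun hn => by have := hcast hn; linarith
  have hgpos : ∀ {n : ℕ}, n0 ≤ n → 0 < g n := by
    intro n hn
    rw [hg]
    exact div_pos (mul_pos (Real.Gamma_pos_of_pos (P1 hn)) (Real.Gamma_pos_of_pos (P2 hn)))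
      (mul_pos (Real.Gamma_pos_of_pos (P3 hn)) (Real.Gamma_pos_of_pos (P4 hn)))
  -- recurrence for g
  have grec : ∀ {n : ℕ}, n0 ≤ n →
      g (n + 1) = g n * ((a1 + n) * (a2 + n) / ((b1 + n) * ((n : ℝ) - S))) := by
    intro n hn
    have e1 : a1 + ((n:ℕ) + 1 : ℕ) = (a1 + n) + 1 := by push_cast; ring
    have e2 : a2 + ((n:ℕ) + 1 : ℕ) = (a2 + n) + 1 := by push_cast; ring
    have e3 : b1 + ((n:ℕ) + 1 : ℕ) = (b1 + n) + 1 := by push_cast; ring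
    have e4 : -S + ((n:ℕ) + 1 : ℕ) = (-S + n) + 1 := by push_cast; ring
    rw [hg]
    simp only
    rw [e1, e2, e3, e4, Real.Gamma_add_one (P1 hn).ne', Real.Gamma_add_one (P2 hn).ne',
      Real.Gamma_add_one (P3 hn).ne', Real.Gamma_add_one (P4 hn).ne']
    have n1 := (Real.Gamma_pos_of_pos (P1 hn)).ne'
    have n2 := (Real.Gamma_pos_of_pos (P2 hn)).ne'
    have n3 := (Real.Gamma_pos_of_pos (P3 hn)).ne'
    have n4 := (Real.Gamma_pos_of_pos (P4 hn)).ne'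
    have n5 := (P3 hn).ne'
    have n6 := (P4 hn).ne'
    have e7 : (n:ℝ) - S = -S + n := by ring
    rw [e7]
    field_simp
  -- E recurrence
  have hstep : ∀ {n : ℕ}, n0 ≤ n → E (n + 1) = E n + d n / g (n + 1) := by
    intro n hn
    have hgr := grec hn
    have hgn := (hgpos hn).ne'
    have hgn1 : g (n+1) ≠ 0 := (hgpos (hn.trans (Nat.le_succ n))).ne'
    have hden1 : 1 + S - (n:ℝ) ≠ 0 := by have := P5 hn; intro hcon; linarith [hcast hn]
    have hden2 : 1 + S - ((n:ℕ) + 1 : ℕ) ≠ 0 := by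
      push_cast
      have := P4 hn
      intro hcon
      linarith
    have hb3 := (P3 hn).ne'
    have hb4 : ((n:ℝ) - S) ≠ 0 := by have := P4 hn; intro hcon; linarith
    have hb5 := (P5 hn).ne'
    set ρ : ℝ := (a1 + n) * (a2 + n) / ((b1 + n) * ((n : ℝ) - S)) with hρ
    have hρne : ρ ≠ 0 := by
      rw [hρ]
      have h1' := P1 hn; have h2' := P2 hn; have h3' := P3 hn
      have h4' : (0:ℝ) < (n:ℝ) - S := by have := P4 hn; linarith
      positivity
    have hgr : g (n + 1) = g n * ρ := grec hn
    have hEe : ∀ m : ℕ, g m ≠ 0 → E m = 1 - h m / g m := by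
      intro m hm
      rw [hE]
      simp only
      rw [sub_div, div_self hm]
    have hdn : d n = h n * ρ - h (n + 1) := by
      simp only [hd, hh, hρ, hK, hc, hS]
      push_cast
      have q1 : (1:ℝ) + (b1 - a1 - a2) - n ≠ 0 := by
        have := P5 hn; intro hcon; rw [hS] at this; linarith
      have q2 : (1:ℝ) + (b1 - a1 - a2) - ((n:ℝ) + 1) ≠ 0 := by
        have := P4 hn; intro hcon; rw [hS] at this; linarith
      have q3 : b1 + (n:ℝ) ≠ 0 := by have := P3 hn; linarith
      have q4 : (n:ℝ) - (b1 - a1 - a2) ≠ 0 := by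
        have := P4 hn; intro hcon; rw [hS] at this; linarith
      have q5 : (n:ℝ) - (b1 - a1 - a2) - 1 ≠ 0 := by
        have := P5 hn; intro hcon; rw [hS] at this; linarith
      field_simp
      ring
    rw [hEe _ hgn1, hEe _ hgn, hgr, hdn, hfrac_helper (h n) (g n) ρ hgn hρne, sub_div]
    ring
  -- partial sums
  have hsum : ∀ N : ℕ, n0 ≤ N → ∀ M : ℕ, N ≤ M →
      E M = E N + ∑ k ∈ Finset.Ico N M, d k / g (k + 1) := by
    intro N hN M hM
    induction M, hM using Nat.le_induction with
    | base => simp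
    | succ M hM ih =>
        rw [hstep (hN.trans hM), ih, Finset.sum_Ico_succ_top hM]
        ring
  -- telescoping function
  set f : ℕ → ℝ := fun k => 1 / (2 * ((k:ℝ) - 1) * k) with hf
  have hfsum : ∀ N M : ℕ, N ≤ M → ∑ k ∈ Finset.Ico N M, (f k - f (k + 1)) = f N - f M := by
    intro N M hM
    induction M, hM using Nat.le_induction with
    | base => simp
    | succ M hM ih =>
        rw [Finset.sum_Ico_succ_top hM, ih]
        ring
  have hfnonneg : ∀ k : ℕ, 2 ≤ k → 0 ≤ f k := by
    intro k hk
    have hk' : (2:ℝ) ≤ (k:ℝ) := by exact_mod_cast hk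
    rw [hf]
    simp only
    have hpos : (0:ℝ) < 2 * ((k:ℝ) - 1) * k := by nlinarith
    exact (div_pos one_pos hpos).le
  -- thresholds for the bound
  obtain ⟨N1, hN1⟩ := Metric.tendsto_atTop.mp hgl (1/2) (by norm_num)
  have hgb : ∀ {n : ℕ}, N1 ≤ n → 1/2 ≤ g n ∧ g n ≤ 3/2 := by
    intro n hn
    have := hN1 n hn
    rw [Real.dist_eq, abs_sub_lt_iff] at this
    constructor <;> linarith [this.1, this.2]
  obtain ⟨n1, hn1⟩ := exists_nat_gt (2 * (|b1| + |S| + 2))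
  set N2 : ℕ := max (max n0 n1) (max N1 2) with hN2
  -- per-term bound
  have hterm : ∀ k : ℕ, N2 ≤ k → |d k / g (k + 1)| ≤ 16 * |K| * (f k - f (k + 1)) := by
    intro k hk
    have hk0 : n0 ≤ k := le_trans (le_trans (le_max_left _ _) (le_max_left _ _)) hk
    have hkn1 : n1 ≤ k := le_trans (le_trans (le_max_right _ _) (le_max_left _ _)) hk
    have hkN1 : N1 ≤ k + 1 := le_trans (le_trans (le_max_left _ _) (le_max_right _ _)) (hk.trans (Nat.le_succ k))
    have hk2 : 2 ≤ k := le_trans (le_trans (le_max_right _ _) (le_max_right _ _)) hk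
    have hk2' : (2:ℝ) ≤ (k:ℝ) := by exact_mod_cast hk2
    have hkbig : 2 * (|b1| + |S| + 2) < (k:ℝ) := hn1.trans_le (by exact_mod_cast hkn1)
    -- factor lower bounds
    have f1 : (k:ℝ)/2 ≤ b1 + k := by linarith
    have f2 : (k:ℝ)/2 ≤ (k:ℝ) - S := by linarith
    have f3 : (k:ℝ)/2 ≤ (k:ℝ) - S - 1 := by linarith
    have fk2 : (0:ℝ) < (k:ℝ)/2 := by linarith
    have g1 : (0:ℝ) < b1 + k := lt_of_lt_of_le fk2 f1
    have g2 : (0:ℝ) < (k:ℝ) - S := lt_of_lt_of_le fk2 f2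
    have g3 : (0:ℝ) < (k:ℝ) - S - 1 := lt_of_lt_of_le fk2 f3
    have hDpos : 0 < (b1 + k) * ((k:ℝ) - S) * ((k:ℝ) - S - 1) :=
      mul_pos (mul_pos g1 g2) g3
    have hD : (k:ℝ)/2 * ((k:ℝ)/2) * ((k:ℝ)/2) ≤ (b1 + k) * ((k:ℝ) - S) * ((k:ℝ) - S - 1) :=
      mul_le_mul (mul_le_mul f1 f2 fk2.le g1.le) f3 fk2.le (mul_nonneg g1.le g2.le)
    have hdk : |d k| = |K| / ((b1 + k) * ((k:ℝ) - S) * ((k:ℝ) - S - 1)) := by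
      rw [hd]
      simp only
      rw [abs_div, abs_neg, abs_of_pos hDpos]
    have hftel : f k - f (k + 1) = 1 / (((k:ℝ) - 1) * k * ((k:ℝ) + 1)) := by
      rw [hf]
      simp only
      push_cast
      have u1 : (k:ℝ) - 1 ≠ 0 := by linarith
      have u2 : (k:ℝ) ≠ 0 := by linarith
      have u3 : (k:ℝ) + 1 ≠ 0 := by linarith
      rw [add_sub_cancel_right]
      field_simp
      ring
    have hgk := (hgb hkN1).1
    have hgkpos : 0 < g (k + 1) := hgpos (hk0.trans (Nat.le_succ k))
    have step1 : |d k / g (k + 1)| ≤ 2 * |d k| := by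
      rw [abs_div, abs_of_pos hgkpos]
      exact half_div_helper _ _ (abs_nonneg _) hgk hgkpos
    have step2 : 2 * |d k| ≤ 16 * |K| * (f k - f (k + 1)) := by
      rw [hdk, hftel, mul_div_assoc', mul_one_div]
      have hTpos : (0:ℝ) < ((k:ℝ) - 1) * k * ((k:ℝ) + 1) := by nlinarith
      rw [div_le_div_iff₀ hDpos hTpos]
      have habsK : 0 ≤ |K| := abs_nonneg K
      set Dv : ℝ := (b1 + k) * ((k:ℝ) - S) * ((k:ℝ) - S - 1) with hDv
      have hT : ((k:ℝ) - 1) * k * ((k:ℝ) + 1) ≤ 8 * Dv := by linarith [hD, hk2']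
      nlinarith [mul_le_mul_of_nonneg_left hT (by positivity : (0:ℝ) ≤ 2 * |K|)]
    calc |d k / g (k + 1)| ≤ 2 * |d k| := step1
      _ ≤ 16 * |K| * (f k - f (k + 1)) := step2
  -- bound on E
  have hEbound : ∀ N : ℕ, N2 ≤ N → |E N| ≤ 16 * |K| * f N := by
    intro N hN
    have hN0 : n0 ≤ N := le_trans (le_trans (le_max_left _ _) (le_max_left _ _)) hN
    have hN2' : 2 ≤ N := le_trans (le_trans (le_max_right _ _) (le_max_right _ _)) hN
    have hlim : Tendsto (fun M : ℕ => |E M - E N|) atTop (𝓝 |E N|) := by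
      have := (hEl.sub (tendsto_const_nhds (x := E N))).abs
      simpa using this
    refine le_of_tendsto hlim ?_
    filter_upwards [eventually_ge_atTop N] with M hM
    rw [hsum N hN0 M hM, add_sub_cancel_left]
    calc |∑ k ∈ Finset.Ico N M, d k / g (k + 1)|
        ≤ ∑ k ∈ Finset.Ico N M, |d k / g (k + 1)| := Finset.abs_sum_le_sum_abs _ _
      _ ≤ ∑ k ∈ Finset.Ico N M, 16 * |K| * (f k - f (k + 1)) := by
          apply Finset.sum_le_sum
          intro k hk
          exact hterm k (le_trans hN (Finset.mem_Ico.mp hk).1)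
      _ = 16 * |K| * (f N - f M) := by rw [← Finset.mul_sum, hfsum N M hM]
      _ ≤ 16 * |K| * f N := by
          have := hfnonneg M (hN2'.trans hM)
          nlinarith [abs_nonneg K]
  -- conclude
  rw [isBigO_iff]
  refine ⟨24 * |K|, ?_⟩
  filter_upwards [eventually_ge_atTop N2] with n hn
  have hN0 : n0 ≤ n := le_trans (le_trans (le_max_left _ _) (le_max_left _ _)) hn
  have hNN1 : N1 ≤ n := le_trans (le_trans (le_max_left _ _) (le_max_right _ _)) hn
  have hN2' : 2 ≤ n := le_trans (le_trans (le_max_right _ _) (le_max_right _ _)) hn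
  have hgpos' := hgpos hN0
  have hgub := (hgb hNN1).2
  have hEb := hEbound n hn
  have habsE : |E n| = |g n - h n| / g n := by
    rw [hE]
    simp only
    rw [abs_div, abs_of_pos hgpos']
  rw [habsE, div_le_iff₀ hgpos'] at hEb
  have hfn : 0 ≤ f n := hfnonneg n hN2'
  have hn2' : (2:ℝ) ≤ (n:ℝ) := by exact_mod_cast hN2'
  have hfle : f n ≤ ((n:ℝ)⁻¹) ^ 2 := by
    rw [hf]
    simp only
    rw [inv_pow, ← one_div]
    have hd2 : (0:ℝ) < (n:ℝ) ^ 2 := by nlinarith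
    have hle : (n:ℝ) ^ 2 ≤ 2 * ((n:ℝ) - 1) * n := by nlinarith
    exact one_div_le_one_div_of_le hd2 hle
  show ‖g n - h n‖ ≤ 24 * |K| * ‖((n:ℝ)⁻¹) ^ 2‖
  rw [Real.norm_eq_abs, Real.norm_eq_abs, abs_of_nonneg (by positivity : (0:ℝ) ≤ ((n:ℝ)⁻¹) ^ 2)]
  have habsK : (0:ℝ) ≤ |K| := abs_nonneg K
  calc |g n - h n| ≤ 16 * |K| * f n * g n := hEb
    _ ≤ 16 * |K| * f n * (3/2) :=
        mul_le_mul_of_nonneg_left hgub (mul_nonneg (by positivity) hfn)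
    _ = 24 * |K| * f n := by ring
    _ ≤ 24 * |K| * ((n:ℝ)⁻¹) ^ 2 := mul_le_mul_of_nonneg_left hfle (by positivity)
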